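/- Let d, ℓ⁺, ℓ⁻, p, q, p₁, q₁ be positive integers and assume that either (p ≥ 2 and q ≥ 2) or ℓ⁺ > ℓ⁻. Then q₁(d² − ℓ⁻) + (q₁ℓ⁺ + p₁ℓ⁻)(ℓ⁺ + pq·ℓ⁻ − ℓ⁻(p + q))(ℓ⁻ − 1) ≥ 0. -/
import Mathlib


/-- The positivity claim in the proof of Theorem 7.7: if `p, q ≥ 2` or
`ℓ⁺ > ℓ⁻`, then the numerator of the coefficient of the first determinant is
nonnegative. -/
theorem thm_7_7_positivity (d lp lm p q p1 q1 : ℤ)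
    (hd : 0 < d) (hlp : 0 < lp) (hlm : 0 < lm)
    (hp : 0 < p) (hq : 0 < q) (hp1 : 0 < p1) (hq1 : 0 < q1)
    (hcase : (2 ≤ p ∧ 2 ≤ q) ∨ lm < lp) :
    0 ≤ q1 * (d ^ 2 - lm)
        + (q1 * lp + p1 * lm) * (lp + p * q * lm - lm * (p + q)) * (lm - 1) := by
  have hd2 : 1 ≤ d ^ 2 := by nlinarith
  have hm1 : 0 ≤ lm - 1 := by omega
  have hmid : 1 ≤ lp + p * q * lm - lm * (p + q) := by
    rcases hcase with ⟨h2p, h2q⟩ | hlt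
    · nlinarith [mul_nonneg (by omega : (0:ℤ) ≤ p - 2) (by omega : (0:ℤ) ≤ q - 1),
        mul_nonneg (by omega : (0:ℤ) ≤ q - 2) hlm.le]
    · nlinarith [mul_nonneg (by omega : (0:ℤ) ≤ p - 1) (by omega : (0:ℤ) ≤ q - 1)]
  have hcoef : q1 ≤ q1 * lp + p1 * lm := by nlinarith
  have hterm : q1 * (lm - 1) ≤ (q1 * lp + p1 * lm) * (lp + p * q * lm - lm * (p + q)) * (lm - 1) := by
    have := mul_le_mul hcoef hmid (by omega) (by positivity)
    nlinarith [mul_le_mul_of_nonneg_right this hm1]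
  nlinarith
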